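/- Let K = (O, P) be a dl-program and I ⊆ HB_P. Then I is a weak answer set of K if and only if I' = I ∪ {σ_B : B ∈ DL_P and I ⊭_O B} is a weak answer set of σ(K). -/

import Mathlib

/-!
A formalization of description logic programs (dl-programs) in the sense of
Eiter et al., over an abstract classical first-order semantics, together with
the translations π, π*, π', σ, τ, τ', τ* and the various answer-set semantics
(weak / strong answer sets, weakly / strongly well-supported answer sets) and
Reiter's default logic.
-/

namespace DLP

attribute [local instance] Classical.propDecidable

noncomputable section

/-! ### A minimal classical first-order logic with equality -/

/-- A relational first-order signature: relation symbols with arities,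
and constant symbols (no proper function symbols). -/
structure Sig : Type 1 where
  Rel : Type
  arity : Rel → ℕ
  Const : Type

/-- First-order terms: (named) variables and constants. -/
inductive Term (σ : Sig) : Type where
  | var : ℕ → Term σ
  | const : σ.Const → Term σ

/-- First-order formulas over a signature, with (true) equality. -/
inductive Fml (σ : Sig) : Type where
  | rel : (R : σ.Rel) → (Fin (σ.arity R) → Term σ) → Fml σ
  | eq : Term σ → Term σ → Fml σ
  | falsum : Fml σ
  | imp : Fml σ → Fml σ → Fml σ
  | all : ℕ → Fml σ → Fml σ

namespace Fml
variable {σ : Sig}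

def not (f : Fml σ) : Fml σ := f.imp .falsum

def verum : Fml σ := Fml.not .falsum

def and (f g : Fml σ) : Fml σ := Fml.not (f.imp g.not)

/-- Finite (syntactic) conjunction. -/
def conjList (l : List (Fml σ)) : Fml σ := l.foldr Fml.and verum

end Fml

/-- A first-order structure: a nonempty domain together with interpretations
of the constant and relation symbols. -/
structure Struc (σ : Sig) : Type 1 where
  Dom : Type
  dne : Nonempty Dom
  cI : σ.Const → Dom
  rI : (R : σ.Rel) → (Fin (σ.arity R) → Dom) → Prop

/-- Value of a term in a structure under a variable assignment. -/
def Term.val {σ : Sig} (M : Struc σ) (env : ℕ → M.Dom) : Term σ → M.Dom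
  | .var n => env n
  | .const c => M.cI c

/-- Tarskian satisfaction. -/
def Fml.Sat {σ : Sig} (M : Struc σ) : (ℕ → M.Dom) → Fml σ → Prop
  | env, .rel R ts => M.rI R fun i => (ts i).val M env
  | env, .eq t u => t.val M env = u.val M env
  | _, .falsum => False
  | env, .imp f g => f.Sat M env → g.Sat M env
  | env, .all n f => ∀ d : M.Dom, f.Sat M (Function.update env n d)

/-- A structure models a formula if it satisfies it under every assignment. -/
def Struc.models {σ : Sig} (M : Struc σ) (φ : Fml σ) : Prop := ∀ env, φ.Sat M env

def Struc.modelsSet {σ : Sig} (M : Struc σ) (Γ : Set (Fml σ)) : Prop := ∀ φ ∈ Γ, M.models φ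

/-- Classical first-order entailment `Γ ⊨ φ`. -/
def Entails {σ : Sig} (Γ : Set (Fml σ)) (φ : Fml σ) : Prop :=
  ∀ M : Struc σ, M.modelsSet Γ → M.models φ

/-- Satisfiability of a set of sentences. -/
def SatSet {σ : Sig} (Γ : Set (Fml σ)) : Prop := ∃ M : Struc σ, M.modelsSet Γ

/-- `Th Γ` is the set of classical consequences of `Γ`. -/
def Th {σ : Sig} (Γ : Set (Fml σ)) : Set (Fml σ) := { φ | Entails Γ φ }

/-- The relation symbols occurring in a formula. -/
def Fml.RelIn {σ : Sig} : Fml σ → Set σ.Rel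
  | .rel R _ => {R}
  | .eq _ _ => ∅
  | .falsum => ∅
  | .imp f g => f.RelIn ∪ g.RelIn
  | .all _ f => f.RelIn

/-- Arity-preserving signature morphisms. -/
structure SigHom (σ τ : Sig) where
  onRel : σ.Rel → τ.Rel
  har : ∀ R, τ.arity (onRel R) = σ.arity R
  onConst : σ.Const → τ.Const

def Term.map {σ τ : Sig} (h : SigHom σ τ) : Term σ → Term τ
  | .var n => .var n
  | .const c => .const (h.onConst c)

def Fml.map {σ τ : Sig} (h : SigHom σ τ) : Fml σ → Fml τ
  | .rel R ts => .rel (h.onRel R) fun i => (ts (Fin.cast (h.har R) i)).map h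
  | .eq t u => .eq (t.map h) (u.map h)
  | .falsum => .falsum
  | .imp f g => .imp (f.map h) (g.map h)
  | .all n f => .all n (f.map h)

/-! ### Dl-programs -/

/-- The vocabulary of a dl-program: ontology relation symbols, program
predicate symbols (disjoint from the former), and a finite nonempty set of
constant symbols. -/
structure DLSig : Type 1 where
  Rel : Type
  rArity : Rel → ℕ
  PP : Type
  pArity : PP → ℕ
  Const : Type
  cne : Nonempty Const
  cfin : Fintype Const

instance (S : DLSig) : Nonempty S.Const := S.cne
instance (S : DLSig) : Fintype S.Const := S.cfin

/-- The combined first-order signature of ontology relations and program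
predicates. -/
def DLSig.fol (S : DLSig) : Sig :=
  ⟨S.Rel ⊕ S.PP, Sum.elim S.rArity S.pArity, S.Const⟩

/-- A ground program atom `p(c⃗)`. -/
structure PAtom (S : DLSig) where
  p : S.PP
  args : Fin (S.pArity p) → S.Const

/-- A program atom as a first-order sentence. -/
def PAtom.fml {S : DLSig} (a : PAtom S) : Fml S.fol :=
  .rel (Sum.inr a.p) fun i => .const (a.args i)

/-- An entry `S op p` of the input list of a dl-atom: `S` is an ontology
relation symbol or a negated one (flag `neg`), `op` is `⊕` (`plus = true`) or
the constraint operator `⊖` (`plus = false`), and `p` is a program predicate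
of the same arity. -/
structure DLEntry (S : DLSig) where
  n : ℕ
  R : S.Rel
  hR : S.rArity R = n
  neg : Bool
  plus : Bool
  p : S.PP
  hp : S.pArity p = n

/-- The ground literal `S(e⃗)` (possibly negated) for an entry. -/
def DLEntry.lit {S : DLSig} (en : DLEntry S) (e : Fin en.n → S.Const) : Fml S.fol :=
  let base : Fml S.fol := .rel (Sum.inl en.R) fun i => .const (e (Fin.cast en.hR i))
  if en.neg then base.not else base

/-- The ground program atom `p(e⃗)` for an entry. -/
def DLEntry.patom {S : DLSig} (en : DLEntry S) (e : Fin en.n → S.Const) : PAtom S :=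
  ⟨en.p, fun i => e (Fin.cast en.hp i)⟩

/-- The input `A_i(I)` contributed by the entry under interpretation `I`:
`{S(e⃗) : p(e⃗) ∈ I}` for `⊕`, and `{¬S(e⃗) : p(e⃗) ∉ I}` for `⊖`. -/
def DLEntry.input {S : DLSig} (en : DLEntry S) (I : Set (PAtom S)) : Set (Fml S.fol) :=
  if en.plus then { φ | ∃ e, en.patom e ∈ I ∧ φ = en.lit e }
  else { φ | ∃ e, en.patom e ∉ I ∧ φ = (en.lit e).not }

/-- A ground dl-atom `DL[S₁ op₁ p₁, …, S_m op_m p_m; Q](t⃗)`, with `Q(t⃗)` a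
sentence of the ontology language. -/
structure DLAtom (S : DLSig) where
  entries : List (DLEntry S)
  Q : Fml S.fol

/-- Satisfaction of a dl-atom: `I ⊨_O A` iff `O(I;λ) ⊨ Q(t⃗)`. -/
def SatDL {S : DLSig} (O : Set (Fml S.fol)) (I : Set (PAtom S)) (A : DLAtom S) : Prop :=
  Entails (O ∪ ⋃ en ∈ A.entries, en.input I) A.Q

/-- A body element of a dl-rule: a program atom or a dl-atom. -/
inductive BElem (S : DLSig) where
  | atom : PAtom S → BElem S
  | dl : DLAtom S → BElem S

/-- A dl-rule `head ← pos, not neg`. -/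
structure Rule (S : DLSig) where
  head : PAtom S
  pos : List (BElem S)
  neg : List (BElem S)

/-- Satisfaction of a body element. -/
def SatB {S : DLSig} (O : Set (Fml S.fol)) (I : Set (PAtom S)) : BElem S → Prop
  | .atom a => a ∈ I
  | .dl A => SatDL O I A

/-- The program predicates occurring in a body element (including the input
predicates of dl-atoms). -/
def BElem.preds {S : DLSig} : BElem S → Set S.PP
  | .atom a => {a.p}
  | .dl A => { q | ∃ en ∈ A.entries, en.p = q }

/-- The program predicates occurring in a rule. -/
def Rule.preds {S : DLSig} (r : Rule S) : Set S.PP :=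
  {r.head.p} ∪ (⋃ b ∈ r.pos, b.preds) ∪ (⋃ b ∈ r.neg, b.preds)

/-- The Herbrand base of a program: all ground atoms built from program
predicates occurring in `P` and the constants. -/
def HB {S : DLSig} (P : Set (Rule S)) : Set (PAtom S) :=
  { a | ∃ r ∈ P, a.p ∈ r.preds }

/-- The dl-atoms occurring in `P`. -/
def DLatoms {S : DLSig} (P : Set (Rule S)) : Set (DLAtom S) :=
  { A | ∃ r ∈ P, BElem.dl A ∈ r.pos ∨ BElem.dl A ∈ r.neg }

/-- A dl-atom is monotonic relative to `K = (O,P)`. -/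
def Monotonic {S : DLSig} (O : Set (Fml S.fol)) (P : Set (Rule S)) (A : DLAtom S) : Prop :=
  ∀ ⦃I I' : Set (PAtom S)⦄, I ⊆ I' → I' ⊆ HB P → SatDL O I A → SatDL O I' A

/-- A formula of the ontology language: no program predicate occurs in it. -/
def OntoFml {S : DLSig} (φ : Fml S.fol) : Prop := ∀ p : S.PP, Sum.inr p ∉ φ.RelIn

/-- The immediate-consequence operator of a positive program. -/
def gamma {S : DLSig} (O : Set (Fml S.fol)) (P : Set (Rule S)) (I : Set (PAtom S)) :
    Set (PAtom S) :=
  { a | ∃ r ∈ P, r.head = a ∧ ∀ b ∈ r.pos, SatB O I b }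

def gammaIter {S : DLSig} (O : Set (Fml S.fol)) (P : Set (Rule S)) : ℕ → Set (PAtom S)
  | 0 => ∅
  | k + 1 => gamma O P (gammaIter O P k)

/-- The least fixpoint of `γ`, as the union of its iterates from `∅`. -/
def lfpGamma {S : DLSig} (O : Set (Fml S.fol)) (P : Set (Rule S)) : Set (PAtom S) :=
  ⋃ k, gammaIter O P k

/-- The strong dl-transform `sP_O^I`. -/
def sReduct {S : DLSig} (O : Set (Fml S.fol)) (P : Set (Rule S)) (I : Set (PAtom S)) :
    Set (Rule S) :=
  { r' | ∃ r ∈ P,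
      (∀ A : DLAtom S, BElem.dl A ∈ r.pos → ¬ Monotonic O P A → SatDL O I A) ∧
      (∀ b ∈ r.neg, ¬ SatB O I b) ∧
      r' = ⟨r.head,
            r.pos.filter fun b => decide (match b with
              | .atom _ => True
              | .dl A => Monotonic O P A), []⟩ }

/-- The weak dl-transform `wP_O^I`. -/
def wReduct {S : DLSig} (O : Set (Fml S.fol)) (P : Set (Rule S)) (I : Set (PAtom S)) :
    Set (Rule S) :=
  { r' | ∃ r ∈ P,
      (∀ A : DLAtom S, BElem.dl A ∈ r.pos → SatDL O I A) ∧
      (∀ b ∈ r.neg, ¬ SatB O I b) ∧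
      r' = ⟨r.head,
            r.pos.filter fun b => decide (∃ a, b = BElem.atom a), []⟩ }

/-- `I` is a strong answer set of `K = (O,P)`. -/
def StrongAS {S : DLSig} (O : Set (Fml S.fol)) (P : Set (Rule S)) (I : Set (PAtom S)) : Prop :=
  I = lfpGamma O (sReduct O P I)

/-- `I` is a weak answer set of `K = (O,P)`. -/
def WeakAS {S : DLSig} (O : Set (Fml S.fol)) (P : Set (Rule S)) (I : Set (PAtom S)) : Prop :=
  I = lfpGamma O (wReduct O P I)

end

end DLP
namespace DLP
noncomputable section
attribute [local instance] Classical.propDecidable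

/-! ### The translation π (and π*) eliminating the constraint operator -/

variable {S : DLSig}

/-- The signature of `π(K)`: fresh predicates `π_p` (second summand) and fresh
propositional atoms `π_B` indexed by dl-atoms (third summand). -/
def piSig (S : DLSig) : DLSig where
  Rel := S.Rel
  rArity := S.rArity
  PP := S.PP ⊕ (S.PP ⊕ DLAtom S)
  pArity := Sum.elim S.pArity (Sum.elim S.pArity fun _ => 0)
  Const := S.Const
  cne := S.cne
  cfin := S.cfin

def piHom (S : DLSig) : SigHom S.fol (piSig S).fol :=
  ⟨Sum.map id Sum.inl, fun R => by cases R <;> rfl, id⟩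

def embA {S : DLSig} (a : PAtom S) : PAtom (piSig S) := ⟨Sum.inl a.p, a.args⟩

def embEntry (en : DLEntry S) : DLEntry (piSig S) :=
  ⟨en.n, en.R, en.hR, en.neg, en.plus, Sum.inl en.p, en.hp⟩

/-- A dl-atom, embedded unchanged. -/
def embDL (A : DLAtom S) : DLAtom (piSig S) :=
  ⟨A.entries.map embEntry, A.Q.map (piHom S)⟩

/-- `π(λ)`: replace each `S ⊖ p` by `¬S ⊕ π_p`. -/
def piEntry (en : DLEntry S) : DLEntry (piSig S) :=
  if en.plus then embEntry en
  else ⟨en.n, en.R, en.hR, !en.neg, true, Sum.inr (Sum.inl en.p), en.hp⟩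

def piDL (A : DLAtom S) : DLAtom (piSig S) :=
  ⟨A.entries.map piEntry, A.Q.map (piHom S)⟩

/-- The fresh propositional atom `π_B`. -/
def piBAtom (B : DLAtom S) : PAtom (piSig S) :=
  ⟨Sum.inr (Sum.inr B), fun i => i.elim0⟩

/-- The fresh atom `π_p(e⃗)`. -/
def piPAtom (p : S.PP) (e : Fin (S.pArity p) → S.Const) : PAtom (piSig S) :=
  ⟨Sum.inr (Sum.inl p), e⟩

/-- `π(B)` for a positive body element (the part that stays positive). -/
def piPos (O : Set (Fml S.fol)) (P : Set (Rule S)) : BElem S → Option (BElem (piSig S))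
  | .atom a => some (.atom (embA a))
  | .dl B => if Monotonic O P B then some (.dl (embDL B)) else none

/-- `π(B)` for a positive body element (the part moved under `not`). -/
def piPosNeg (O : Set (Fml S.fol)) (P : Set (Rule S)) : BElem S → Option (BElem (piSig S))
  | .dl B => if Monotonic O P B then none else some (.atom (piBAtom B))
  | _ => none

/-- `π(not B)` for a negative body element. -/
def piNeg : BElem S → BElem (piSig S)
  | .atom a => .atom (embA a)
  | .dl B => .dl (piDL B)

/-- The main rule (i) of `π(r)`. -/
def piRuleMain (O : Set (Fml S.fol)) (P : Set (Rule S)) (r : Rule S) : Rule (piSig S) :=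
  ⟨embA r.head, r.pos.filterMap (piPos O P),
    r.pos.filterMap (piPosNeg O P) ++ r.neg.map piNeg⟩

/-- `S ⊖ p` occurs in the dl-atom `A`. -/
def ominusIn (A : DLAtom S) (p : S.PP) : Prop :=
  ∃ en ∈ A.entries, en.plus = false ∧ en.p = p

/-- The program `π(P)`. -/
def piProg (O : Set (Fml S.fol)) (P : Set (Rule S)) : Set (Rule (piSig S)) :=
  (⋃ r ∈ P, {piRuleMain O P r}) ∪
  { r' | ∃ r ∈ P, ∃ B, BElem.dl B ∈ r.pos ∧ ¬ Monotonic O P B ∧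
      r' = ⟨piBAtom B, [], [.dl (piDL B)]⟩ } ∪
  { r' | ∃ r ∈ P, ∃ B, (BElem.dl B ∈ r.pos ∨ BElem.dl B ∈ r.neg) ∧ ¬ Monotonic O P B ∧
      ∃ p, ominusIn B p ∧ ∃ e, r' = ⟨piPAtom p e, [], [.atom (embA ⟨p, e⟩)]⟩ }

/-- The ontology, over the extended signature. -/
def piO (O : Set (Fml S.fol)) : Set (Fml (piSig S).fol) := Fml.map (piHom S) '' O

/-- `π₁(I) = {π_p(c⃗) ∈ HB_{π(P)} : p(c⃗) ∉ I}`. -/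
def pi1 (O : Set (Fml S.fol)) (P : Set (Rule S)) (I : Set (PAtom S)) :
    Set (PAtom (piSig S)) :=
  { a | ∃ p e, a = piPAtom p e ∧ a ∈ HB (piProg O P) ∧ (⟨p, e⟩ : PAtom S) ∉ I }

/-- `π₂(I) = {π_B ∈ HB_{π(P)} : B ∈ DL_P^? and I ⊭_O B}`. -/
def pi2 (O : Set (Fml S.fol)) (P : Set (Rule S)) (I : Set (PAtom S)) :
    Set (PAtom (piSig S)) :=
  { a | ∃ B ∈ DLatoms P, ¬ Monotonic O P B ∧ ¬ SatDL O I B ∧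
      a = piBAtom B ∧ a ∈ HB (piProg O P) }

/-- `π(I) = I ∪ π₁(I) ∪ π₂(I)`. -/
def piSet (O : Set (Fml S.fol)) (P : Set (Rule S)) (I : Set (PAtom S)) :
    Set (PAtom (piSig S)) :=
  (embA '' I) ∪ pi1 O P I ∪ pi2 O P I

/-! The translation π*, which treats every dl-atom the way π treats
nonmonotonic dl-atoms. -/

def piStarPos : BElem S → Option (BElem (piSig S))
  | .atom a => some (.atom (embA a))
  | .dl _ => none

def piStarPosNeg : BElem S → Option (BElem (piSig S))
  | .dl B => some (.atom (piBAtom B))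
  | _ => none

def piStarRuleMain (r : Rule S) : Rule (piSig S) :=
  ⟨embA r.head, r.pos.filterMap piStarPos,
    r.pos.filterMap piStarPosNeg ++ r.neg.map piNeg⟩

/-- The program `π*(P)`. -/
def piStarProg (P : Set (Rule S)) : Set (Rule (piSig S)) :=
  (⋃ r ∈ P, {piStarRuleMain r}) ∪
  { r' | ∃ r ∈ P, ∃ B, BElem.dl B ∈ r.pos ∧ r' = ⟨piBAtom B, [], [.dl (piDL B)]⟩ } ∪
  { r' | ∃ r ∈ P, ∃ B, (BElem.dl B ∈ r.pos ∨ BElem.dl B ∈ r.neg) ∧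
      ∃ p, ominusIn B p ∧ ∃ e, r' = ⟨piPAtom p e, [], [.atom (embA ⟨p, e⟩)]⟩ }

/-- `π*(I)`. -/
def piStarSet (O : Set (Fml S.fol)) (P : Set (Rule S)) (I : Set (PAtom S)) :
    Set (PAtom (piSig S)) :=
  (embA '' I) ∪
  { a | ∃ p e, a = piPAtom p e ∧ a ∈ HB (piStarProg P) ∧ (⟨p, e⟩ : PAtom S) ∉ I } ∪
  { a | ∃ B ∈ DLatoms P, ¬ SatDL O I B ∧ a = piBAtom B ∧ a ∈ HB (piStarProg P) }

end
end DLP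
namespace DLP
noncomputable section
attribute [local instance] Classical.propDecidable

variable {S : DLSig}

/-! ### The translation π' of Eiter et al. (well-founded semantics paper) -/

/-- The signature of `π'(K)`: fresh ontology relation symbols `S'_p` and fresh
program predicates `p̄`, one of each for every program predicate `p`. -/
def piPrimeSig (S : DLSig) : DLSig where
  Rel := S.Rel ⊕ S.PP
  rArity := Sum.elim S.rArity S.pArity
  PP := S.PP ⊕ S.PP
  pArity := Sum.elim S.pArity S.pArity
  Const := S.Const
  cne := S.cne
  cfin := S.cfin

def piPrimeHom (S : DLSig) : SigHom S.fol (piPrimeSig S).fol :=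
  ⟨Sum.map Sum.inl Sum.inl, fun R => by cases R <;> rfl, id⟩

def embA' (a : PAtom S) : PAtom (piPrimeSig S) := ⟨Sum.inl a.p, a.args⟩

/-- The fresh atom `p̄(e⃗)`. -/
def barA (p : S.PP) (e : Fin (S.pArity p) → S.Const) : PAtom (piPrimeSig S) :=
  ⟨Sum.inr p, e⟩

/-- Replace `S ⊖ p` by `¬S ⊕ p̄` in an input entry. -/
def piPrimeEntry (en : DLEntry S) : DLEntry (piPrimeSig S) :=
  if en.plus then ⟨en.n, Sum.inl en.R, en.hR, en.neg, true, Sum.inl en.p, en.hp⟩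
  else ⟨en.n, Sum.inl en.R, en.hR, !en.neg, true, Sum.inr en.p, en.hp⟩

def piPrimeDL (A : DLAtom S) : DLAtom (piPrimeSig S) :=
  ⟨A.entries.map piPrimeEntry, A.Q.map (piPrimeHom S)⟩

def piPrimeB : BElem S → BElem (piPrimeSig S)
  | .atom a => .atom (embA' a)
  | .dl A => .dl (piPrimeDL A)

def piPrimeRule (r : Rule S) : Rule (piPrimeSig S) :=
  ⟨embA' r.head, r.pos.map piPrimeB, r.neg.map piPrimeB⟩

/-- The auxiliary dl-atom `DL[S'_p ⊕ p; S'_p](e⃗)`. -/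
def auxDL (p : S.PP) (e : Fin (S.pArity p) → S.Const) : DLAtom (piPrimeSig S) :=
  ⟨[⟨S.pArity p, Sum.inr p, rfl, false, true, Sum.inl p, rfl⟩],
   Fml.rel (σ := (piPrimeSig S).fol) (Sum.inl (Sum.inr p)) fun i => .const (e i)⟩

/-- The program `π'(P)`. -/
def piPrimeProg (P : Set (Rule S)) : Set (Rule (piPrimeSig S)) :=
  (⋃ r ∈ P, {piPrimeRule r}) ∪
  { r' | ∃ p : S.PP, (∃ A ∈ DLatoms P, ominusIn A p) ∧
      ∃ e, r' = ⟨barA p e, [], [.dl (auxDL p e)]⟩ }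

def piPrimeO (O : Set (Fml S.fol)) : Set (Fml (piPrimeSig S).fol) :=
  Fml.map (piPrimeHom S) '' O

/-! ### The translation σ making all dl-atoms occur negatively -/

/-- The signature of `σ(K)`: a fresh propositional atom `σ_B` for every
dl-atom `B`. -/
def sigmaSig (S : DLSig) : DLSig where
  Rel := S.Rel
  rArity := S.rArity
  PP := S.PP ⊕ DLAtom S
  pArity := Sum.elim S.pArity fun _ => 0
  Const := S.Const
  cne := S.cne
  cfin := S.cfin

def sigmaHom (S : DLSig) : SigHom S.fol (sigmaSig S).fol :=
  ⟨Sum.map id Sum.inl, fun R => by cases R <;> rfl, id⟩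

def sigmaEmbA (a : PAtom S) : PAtom (sigmaSig S) := ⟨Sum.inl a.p, a.args⟩

def sigmaBAtom (B : DLAtom S) : PAtom (sigmaSig S) := ⟨Sum.inr B, fun i => i.elim0⟩

def sigmaEmbEntry (en : DLEntry S) : DLEntry (sigmaSig S) :=
  ⟨en.n, en.R, en.hR, en.neg, en.plus, Sum.inl en.p, en.hp⟩

def sigmaEmbDL (A : DLAtom S) : DLAtom (sigmaSig S) :=
  ⟨A.entries.map sigmaEmbEntry, A.Q.map (sigmaHom S)⟩

def sigmaEmbB : BElem S → BElem (sigmaSig S)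
  | .atom a => .atom (sigmaEmbA a)
  | .dl A => .dl (sigmaEmbDL A)

def sigmaRule (r : Rule S) : Rule (sigmaSig S) :=
  ⟨sigmaEmbA r.head,
   r.pos.filterMap fun b => match b with
     | .atom a => some (.atom (sigmaEmbA a))
     | .dl _ => none,
   (r.pos.filterMap fun b => match b with
     | .dl B => some (.atom (sigmaBAtom B))
     | _ => none) ++ r.neg.map sigmaEmbB⟩

/-- The program `σ(P)`. -/
def sigmaProg (P : Set (Rule S)) : Set (Rule (sigmaSig S)) :=
  (⋃ r ∈ P, {sigmaRule r}) ∪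
  { r' | ∃ B ∈ DLatoms P, r' = ⟨sigmaBAtom B, [], [.dl (sigmaEmbDL B)]⟩ }

def sigmaO (O : Set (Fml S.fol)) : Set (Fml (sigmaSig S).fol) :=
  Fml.map (sigmaHom S) '' O

end
end DLP
namespace DLP
noncomputable section
attribute [local instance] Classical.propDecidable

/-! ### The congruence rewriting of equality -/

/-- Extend a signature by a fresh binary relation symbol `≈`. -/
def eqExt (σ : Sig) : Sig where
  Rel := σ.Rel ⊕ Unit
  arity := Sum.elim σ.arity fun _ => 2
  Const := σ.Const

def eqHom (σ : Sig) : SigHom σ (eqExt σ) := ⟨Sum.inl, fun _ => rfl, id⟩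

/-- The atom `t ≈ u`. -/
def approx {σ : Sig} (t u : Term (eqExt σ)) : Fml (eqExt σ) :=
  .rel (Sum.inr ()) ![t, u]

/-- Replace (true) equality by the fresh symbol `≈` throughout a formula. -/
def replaceEq {σ : Sig} : Fml σ → Fml (eqExt σ)
  | .rel R ts => .rel (Sum.inl R) fun i => (ts i).map (eqHom σ)
  | .eq t u => approx (t.map (eqHom σ)) (u.map (eqHom σ))
  | .falsum => .falsum
  | .imp f g => .imp (replaceEq f) (replaceEq g)
  | .all n f => .all n (replaceEq f)

def allsList {σ : Sig} (l : List ℕ) (f : Fml σ) : Fml σ := l.foldr Fml.all f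

/-- The reflexivity axiom `∀x (x ≈ x)`. -/
def approxRefl {σ : Sig} : Fml (eqExt σ) := .all 0 (approx (.var 0) (.var 0))

/-- The predicate-replacement (congruence) axiom for a relation symbol `R`:
`∀x⃗ y⃗ ((x⃗ ≈ y⃗) ⊃ (R(x⃗) ⊃ R(y⃗)))`. -/
def congrAx {σ : Sig} (R : σ.Rel) : Fml (eqExt σ) :=
  allsList (List.range (2 * σ.arity R)) <|
    (Fml.conjList ((List.finRange (σ.arity R)).map fun i =>
        approx (.var (i : ℕ)) (.var (σ.arity R + (i : ℕ))))).imp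
      ((Fml.rel (σ := eqExt σ) (Sum.inl R) fun i => .var (i : ℕ)).imp
        (Fml.rel (σ := eqExt σ) (Sum.inl R) fun i => .var (σ.arity R + (i : ℕ))))

variable {S : DLSig}

/-- `τ(O)`: the congruence rewriting of the ontology, together with the
reflexivity and predicate-replacement axioms for the relation symbols of the
ontology language occurring in `O`. -/
def tauO (O : Set (Fml S.fol)) : Set (Fml (eqExt S.fol)) :=
  (replaceEq '' O) ∪ {approxRefl} ∪
  { φ | ∃ R : S.Rel, (∃ ψ ∈ O, Sum.inl R ∈ ψ.RelIn) ∧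
      φ = congrAx (σ := S.fol) (Sum.inl R) }

/-- `τ(S op p)`: the conjunction over `p(c⃗) ∈ HB_P` of `p(c⃗) ⊃ S(c⃗)` (for
`⊕`), resp. `¬p(c⃗) ⊃ ¬S(c⃗)` (for `⊖`). -/
def tauEntry (P : Set (Rule S)) (en : DLEntry S) : Fml S.fol :=
  Fml.conjList
    (((Finset.univ : Finset (Fin en.n → S.Const)).toList.filter
        fun e => decide (en.patom e ∈ HB P)).map
      fun e =>
        if en.plus then ((en.patom e).fml).imp (en.lit e)
        else ((en.patom e).fml).not.imp (en.lit e).not)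

/-- `τ(A)` for a dl-atom `A = DL[λ; Q](t⃗)`. -/
def tauDL (P : Set (Rule S)) (A : DLAtom S) : Fml (eqExt S.fol) :=
  ((Fml.conjList (A.entries.map (tauEntry P))).map (eqHom S.fol)).imp (replaceEq A.Q)

/-- A program atom, as a sentence over the language with `≈`. -/
def PAtom.efml (a : PAtom S) : Fml (eqExt S.fol) := a.fml.map (eqHom S.fol)

/-- `τ(B)` for a body element. -/
def tauB (P : Set (Rule S)) : BElem S → Fml (eqExt S.fol)
  | .atom a => a.efml
  | .dl A => tauDL P A

/-! ### Default logic -/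

/-- A (closed) default `α : β₁,…,β_n / γ`. -/
structure Dft (σ : Sig) where
  pre : Fml σ
  jus : List (Fml σ)
  con : Fml σ

/-- A (closed) default theory `(D, W)`. -/
structure DThy (σ : Sig) where
  D : Set (Dft σ)
  W : Set (Fml σ)

/-- The stages `E_i` of the extension construction relative to a candidate
extension `E`. -/
def extStage {σ : Sig} (Δ : DThy σ) (E : Set (Fml σ)) : ℕ → Set (Fml σ)
  | 0 => Δ.W
  | i + 1 => Th (extStage Δ E i) ∪
      { γ | ∃ d ∈ Δ.D, d.pre ∈ extStage Δ E i ∧ (∀ β ∈ d.jus, Fml.not β ∉ E) ∧ γ = d.con }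

/-- `E` is an extension of the default theory `Δ`. -/
def IsExtension {σ : Sig} (Δ : DThy σ) (E : Set (Fml σ)) : Prop :=
  E = ⋃ i, extStage Δ E i

/-- The default theory `τ(K) = (τ(P), τ(O))`. -/
def tauThy (O : Set (Fml S.fol)) (P : Set (Rule S)) : DThy (eqExt S.fol) where
  D := { d | ∃ r ∈ P,
      d = ⟨Fml.conjList (r.pos.map (tauB P)),
           r.neg.map fun b => (tauB P b).not, r.head.efml⟩ }
  W := tauO O

/-- The default theory `τ*(K)`: `τ(K)` plus the defaults `: ¬p(c⃗) / ¬p(c⃗)`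
for every `p(c⃗) ∈ HB_P`. -/
def tauStarThy (O : Set (Fml S.fol)) (P : Set (Rule S)) : DThy (eqExt S.fol) where
  D := (tauThy O P).D ∪
    { d | ∃ a ∈ HB P, d = ⟨Fml.verum, [(PAtom.efml a).not], (PAtom.efml a).not⟩ }
  W := tauO O

/-! ### The translation τ' (no congruence rewriting; the ontology is moved
into the antecedents of the translated dl-atoms) -/

/-- `τ'(A)` for a dl-atom `A`; here the finite ontology `O` is identified with
the conjunction of its sentences and equality is kept as true equality. -/
def tauDL' (O : Finset (Fml S.fol)) (P : Set (Rule S)) (A : DLAtom S) : Fml S.fol :=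
  ((Fml.conjList O.toList).and (Fml.conjList (A.entries.map (tauEntry P)))).imp A.Q

def tauB' (O : Finset (Fml S.fol)) (P : Set (Rule S)) : BElem S → Fml S.fol
  | .atom a => a.fml
  | .dl A => tauDL' O P A

/-- The default theory `τ'(K) = (D, ∅)`. -/
def tauThy' (O : Finset (Fml S.fol)) (P : Set (Rule S)) : DThy S.fol where
  D := { d | ∃ r ∈ P,
      d = ⟨Fml.conjList (r.pos.map (tauB' O P)),
           r.neg.map fun b => (tauB' O P b).not, r.head.fml⟩ }
  W := ∅

/-! ### Well-supported semantics -/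

/-- `I` is a model of `K = (O,P)`. -/
def IsModel (O : Set (Fml S.fol)) (P : Set (Rule S)) (I : Set (PAtom S)) : Prop :=
  ∀ r ∈ P, (∀ b ∈ r.pos, SatB O I b) → (∀ b ∈ r.neg, ¬ SatB O I b) → r.head ∈ I

/-- `(E, I)` up-to satisfies a body element. -/
def UpSat (O : Set (Fml S.fol)) (E I : Set (PAtom S)) : BElem S → Prop
  | .atom a => a ∈ E
  | .dl A => ∀ F, E ⊆ F → F ⊆ I → SatDL O F A

/-- `(E, I)` up-to satisfies the default negation of a body element. -/
def UpSatN (O : Set (Fml S.fol)) (I' I : Set (PAtom S)) : BElem S → Prop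
  | .atom a => a ∉ I
  | .dl A => ¬ ∃ F, I' ⊆ F ∧ F ⊆ I ∧ SatDL O F A

/-- The operator `T_K`. -/
def TK (O : Set (Fml S.fol)) (P : Set (Rule S)) (E I : Set (PAtom S)) : Set (PAtom S) :=
  { a | ∃ r ∈ P, r.head = a ∧ (∀ b ∈ r.pos, UpSat O E I b) ∧ (∀ b ∈ r.neg, UpSatN O E I b) }

def TKiter (O : Set (Fml S.fol)) (P : Set (Rule S)) (I : Set (PAtom S)) : ℕ → Set (PAtom S)
  | 0 => ∅
  | k + 1 => TK O P (TKiter O P I k) I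

/-- `T_K^∞(∅, I)`. -/
def TKinf (O : Set (Fml S.fol)) (P : Set (Rule S)) (I : Set (PAtom S)) : Set (PAtom S) :=
  ⋃ k, TKiter O P I k

/-- The reduct `P^I` dropping negative bodies. -/
def negReduct (O : Set (Fml S.fol)) (P : Set (Rule S)) (I : Set (PAtom S)) : Set (Rule S) :=
  { r' | ∃ r ∈ P, (∀ b ∈ r.neg, ¬ SatB O I b) ∧ r' = ⟨r.head, r.pos, []⟩ }

/-- `I` is a weakly well-supported answer set of `K`. -/
def WWS (O : Set (Fml S.fol)) (P : Set (Rule S)) (I : Set (PAtom S)) : Prop :=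
  IsModel O P I ∧ I = TKinf O (negReduct O P I) I

/-- `I` is a strongly well-supported answer set of `K`. -/
def SWS (O : Set (Fml S.fol)) (P : Set (Rule S)) (I : Set (PAtom S)) : Prop :=
  IsModel O P I ∧ I = TKinf O P I

end
end DLP

namespace DLP
noncomputable section
attribute [local instance] Classical.propDecidable

variable {S : DLSig}

/-- Pull back a structure over the σ-signature along `sigmaHom`. -/
def sigmaPull (M' : Struc (sigmaSig S).fol) : Struc S.fol where
  Dom := M'.Dom
  dne := M'.dne
  cI := fun c => M'.cI ((sigmaHom S).onConst c)
  rI := fun R v => M'.rI ((sigmaHom S).onRel R) (fun i => v (Fin.cast ((sigmaHom S).har R) i))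

/-- Push forward a structure over the base signature along `sigmaHom`. -/
def sigmaPush (M : Struc S.fol) : Struc (sigmaSig S).fol where
  Dom := M.Dom
  dne := M.dne
  cI := M.cI
  rI := fun R => match R with
    | Sum.inl r => M.rI (Sum.inl r)
    | Sum.inr (Sum.inl p) => M.rI (Sum.inr p)
    | Sum.inr (Sum.inr _) => fun _ => False

lemma sigmaPull_term (M' : Struc (sigmaSig S).fol) (env : ℕ → M'.Dom) (t : Term S.fol) :
    Term.val M' env (t.map (sigmaHom S)) = Term.val (sigmaPull M') env t := by
  cases t <;> rfl

lemma sigmaPull_sat (M' : Struc (sigmaSig S).fol) (φ : Fml S.fol) :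
    ∀ env, Fml.Sat M' env (φ.map (sigmaHom S)) ↔ Fml.Sat (sigmaPull M') env φ := by
  induction φ with
  | rel R ts =>
    intro env
    have : Fml.Sat M' env ((Fml.rel R ts).map (sigmaHom S))
        = Fml.Sat (sigmaPull M') env (.rel R ts) := by
      show M'.rI _ _ = M'.rI _ _
      congr 1
      funext i
      exact sigmaPull_term M' env _
    exact iff_of_eq this
  | eq t u => intro env; show _ = _ ↔ _ = _; rw [sigmaPull_term, sigmaPull_term]; rfl
  | falsum => intro env; exact Iff.rfl
  | imp f g ihf ihg => intro env; exact imp_congr (ihf env) (ihg env)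
  | all n f ih => intro env; exact forall_congr' fun d => ih _

lemma sigmaPull_push_sat (M : Struc S.fol) (φ : Fml S.fol) :
    ∀ env, Fml.Sat (sigmaPull (sigmaPush M)) env φ ↔ Fml.Sat M env φ := by
  have hterm : ∀ (env : ℕ → M.Dom) (t : Term S.fol),
      Term.val (sigmaPull (sigmaPush M)) env t = Term.val M env t := by
    intro env t; cases t <;> rfl
  induction φ with
  | rel R ts =>
    intro env
    have key : ∀ (Z : (Fin (S.fol.arity R) → M.Dom) → Prop)
        (hZ : (sigmaPull (sigmaPush M)).rI R = Z),
        Fml.Sat (sigmaPull (sigmaPush M)) env (.rel R ts) = Z (fun i => Term.val M env (ts i)) := by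
      intro Z hZ
      show (sigmaPull (sigmaPush M)).rI R _ = _
      rw [hZ]
      congr 1
    cases R with
    | inl r =>
      have : Fml.Sat (sigmaPull (sigmaPush M)) env (.rel (Sum.inl r) ts)
          = Fml.Sat M env (.rel (Sum.inl r) ts) := by
        apply key
        funext v
        show M.rI (Sum.inl r) (fun i => v (Fin.cast _ i)) = M.rI (Sum.inl r) v
        congr 1
      exact iff_of_eq this
    | inr p =>
      have : Fml.Sat (sigmaPull (sigmaPush M)) env (.rel (Sum.inr p) ts)
          = Fml.Sat M env (.rel (Sum.inr p) ts) := by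
        apply key
        funext v
        show M.rI (Sum.inr p) (fun i => v (Fin.cast _ i)) = M.rI (Sum.inr p) v
        congr 1
      exact iff_of_eq this
  | eq t u => intro env; show _ = _ ↔ _ = _; exact Iff.of_eq (congrArg₂ (· = ·) (hterm env t) (hterm env u))
  | falsum => intro env; exact Iff.rfl
  | imp f g ihf ihg => intro env; exact imp_congr (ihf env) (ihg env)
  | all n f ih => intro env; exact forall_congr' fun d => ih _

/-- Entailment transfers along the σ-embedding. -/
lemma sigma_entails_iff (Γ : Set (Fml S.fol)) (φ : Fml S.fol) :
    Entails (Fml.map (sigmaHom S) '' Γ) (φ.map (sigmaHom S)) ↔ Entails Γ φ := by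
  constructor
  · intro h M hM env
    rw [← sigmaPull_push_sat M φ env]
    rw [← sigmaPull_sat (sigmaPush M) φ env]
    apply h (sigmaPush M)
    rintro ψ ⟨ψ₀, hψ₀, rfl⟩ env'
    rw [sigmaPull_sat (sigmaPush M) ψ₀ env', sigmaPull_push_sat M ψ₀ env']
    exact hM ψ₀ hψ₀ env'
  · intro h M' hM' env
    rw [sigmaPull_sat]
    apply h (sigmaPull M')
    intro ψ hψ env'
    rw [← sigmaPull_sat M' ψ env']
    exact hM' _ ⟨ψ, hψ, rfl⟩ env'

lemma sigmaEmbA_inj {a b : PAtom S} (h : sigmaEmbA a = sigmaEmbA b) : a = b := by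
  obtain ⟨p, args⟩ := a
  obtain ⟨q, brgs⟩ := b
  injection h with h1 h2
  injection h1 with h3
  subst h3
  cases h2
  rfl

lemma sigmaEmbA_ne_BAtom (a : PAtom S) (B : DLAtom S) : sigmaEmbA a ≠ sigmaBAtom B := by
  intro h
  have := congrArg PAtom.p h
  simp [sigmaEmbA, sigmaBAtom] at this

lemma sigmaBAtom_inj {B B' : DLAtom S} (h : sigmaBAtom B = sigmaBAtom B') : B = B' := by
  have h2 : (Sum.inr B : S.PP ⊕ DLAtom S) = Sum.inr B' := congrArg PAtom.p h
  exact Sum.inr.inj h2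

lemma map_not (φ : Fml S.fol) : (φ.not).map (sigmaHom S) = (φ.map (sigmaHom S)).not := rfl

lemma lit_map (en : DLEntry S) (e : Fin en.n → S.Const) :
    (en.lit e).map (sigmaHom S) = (sigmaEmbEntry en).lit e := by
  obtain ⟨n, R, hR, neg, plus, p, hp⟩ := en
  have hbase : ((Fml.rel (σ := S.fol) (Sum.inl R) fun i =>
        .const (e (Fin.cast hR i))).map (sigmaHom S))
      = (Fml.rel (σ := (sigmaSig S).fol) (Sum.inl R) fun i =>
        .const (e (Fin.cast hR i))) := by
    show Fml.rel _ _ = Fml.rel _ _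
    congr 1
  cases neg with
  | false => exact hbase
  | true =>
    show (Fml.not _).map (sigmaHom S) = Fml.not _
    rw [map_not, hbase]
    show Fml.not _ = Fml.not _
    congr 1

lemma patom_emb (en : DLEntry S) (e : Fin en.n → S.Const) :
    (sigmaEmbEntry en).patom e = sigmaEmbA (en.patom e) := rfl

lemma input_emb (en : DLEntry S) (I : Set (PAtom S)) (I' : Set (PAtom (sigmaSig S)))
    (hI' : ∀ a : PAtom S, sigmaEmbA a ∈ I' ↔ a ∈ I) :
    (sigmaEmbEntry en).input I' = Fml.map (sigmaHom S) '' en.input I := by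
  have hplus : (sigmaEmbEntry en).plus = en.plus := rfl
  unfold DLEntry.input
  rw [hplus]
  by_cases hp : en.plus = true
  · rw [if_pos hp, if_pos hp]
    ext φ
    constructor
    · rintro ⟨e, he, rfl⟩
      exact ⟨en.lit e, ⟨e, (hI' _).mp (patom_emb en e ▸ he), rfl⟩, lit_map en e⟩
    · rintro ⟨ψ, ⟨e, he, rfl⟩, rfl⟩
      exact ⟨e, by rw [patom_emb]; exact (hI' _).mpr he, lit_map en e⟩
  · rw [if_neg hp, if_neg hp]
    ext φ
    constructor
    · rintro ⟨e, he, rfl⟩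
      refine ⟨(en.lit e).not, ⟨e, fun hc => he ?_, rfl⟩, by rw [map_not]; exact congrArg Fml.not (lit_map en e)⟩
      exact (hI' (en.patom e)).mpr hc
    · rintro ⟨ψ, ⟨e, he, rfl⟩, rfl⟩
      refine ⟨e, fun hc => he ((hI' _).mp (patom_emb en e ▸ hc)), by rw [map_not, lit_map]⟩

lemma satDL_emb (O : Set (Fml S.fol)) (B : DLAtom S)
    (I : Set (PAtom S)) (I' : Set (PAtom (sigmaSig S)))
    (hI' : ∀ a : PAtom S, sigmaEmbA a ∈ I' ↔ a ∈ I) :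
    SatDL (sigmaO O) I' (sigmaEmbDL B) ↔ SatDL O I B := by
  unfold SatDL
  have hset : (sigmaO O ∪ ⋃ en ∈ (sigmaEmbDL B).entries, en.input I')
      = Fml.map (sigmaHom S) '' (O ∪ ⋃ en ∈ B.entries, en.input I) := by
    rw [Set.image_union]
    congr 1
    ext φ
    simp only [Set.mem_iUnion, sigmaEmbDL, List.mem_map, Set.mem_image]
    constructor
    · rintro ⟨en', ⟨⟨en, hen, rfl⟩, hφ⟩⟩
      rw [input_emb en I I' hI'] at hφ
      obtain ⟨ψ, hψ, rfl⟩ := hφ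
      exact ⟨ψ, ⟨en, hen, hψ⟩, rfl⟩
    · rintro ⟨ψ, ⟨en, hen, hψ⟩, rfl⟩
      refine ⟨sigmaEmbEntry en, ⟨⟨en, hen, rfl⟩, ?_⟩⟩
      rw [input_emb en I I' hI']
      exact ⟨ψ, hψ, rfl⟩
  rw [hset]
  exact sigma_entails_iff _ _

/-- The set of fresh facts `σ_B` for unsatisfied dl-atoms. -/
def sFacts (O : Set (Fml S.fol)) (P : Set (Rule S)) (I : Set (PAtom S)) :
    Set (PAtom (sigmaSig S)) :=
  { a | ∃ B ∈ DLatoms P, ¬ SatDL O I B ∧ a = sigmaBAtom B }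

/-- The translated interpretation `I'`. -/
def sInt (O : Set (Fml S.fol)) (P : Set (Rule S)) (I : Set (PAtom S)) :
    Set (PAtom (sigmaSig S)) :=
  (sigmaEmbA '' I) ∪ sFacts O P I

variable (O : Set (Fml S.fol)) (P : Set (Rule S)) (I : Set (PAtom S))

lemma mem_sInt_emb (a : PAtom S) : sigmaEmbA a ∈ sInt O P I ↔ a ∈ I := by
  constructor
  · rintro (⟨b, hb, hab⟩ | ⟨B, _, _, hB⟩)
    · exact sigmaEmbA_inj hab ▸ hb
    · exact absurd hB (sigmaEmbA_ne_BAtom a B)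
  · intro h; exact Or.inl ⟨a, h, rfl⟩

lemma mem_sInt_BAtom (B : DLAtom S) :
    sigmaBAtom B ∈ sInt O P I ↔ (B ∈ DLatoms P ∧ ¬ SatDL O I B) := by
  constructor
  · rintro (⟨b, hb, hab⟩ | ⟨B', hB', hs, hB⟩)
    · exact absurd hab (sigmaEmbA_ne_BAtom b B)
    · obtain rfl : B' = B := sigmaBAtom_inj hB.symm
      exact ⟨hB', hs⟩
  · rintro ⟨h1, h2⟩; exact Or.inr ⟨B, h1, h2, rfl⟩

lemma satB_emb (b : BElem S) :
    SatB (sigmaO O) (sInt O P I) (sigmaEmbB b) ↔ SatB O I b := by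
  cases b with
  | atom a => exact mem_sInt_emb O P I a
  | dl A => exact satDL_emb O A I (sInt O P I) (mem_sInt_emb O P I)

lemma mem_sigmaRule_pos (r : Rule S) (b' : BElem (sigmaSig S)) :
    b' ∈ (sigmaRule r).pos ↔ ∃ a, BElem.atom a ∈ r.pos ∧ b' = .atom (sigmaEmbA a) := by
  show b' ∈ r.pos.filterMap _ ↔ _
  rw [List.mem_filterMap]
  constructor
  · rintro ⟨b, hb, hsome⟩
    cases b with
    | atom a => exact ⟨a, hb, (Option.some_inj.mp hsome).symm⟩
    | dl A => simp at hsome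
  · rintro ⟨a, ha, rfl⟩
    exact ⟨.atom a, ha, rfl⟩

lemma mem_sigmaRule_neg (r : Rule S) (b' : BElem (sigmaSig S)) :
    b' ∈ (sigmaRule r).neg ↔
      (∃ B, BElem.dl B ∈ r.pos ∧ b' = .atom (sigmaBAtom B)) ∨
      (∃ b ∈ r.neg, b' = sigmaEmbB b) := by
  show b' ∈ _ ++ _ ↔ _
  rw [List.mem_append, List.mem_filterMap, List.mem_map]
  constructor
  · rintro (⟨b, hb, hsome⟩ | ⟨b, hb, rfl⟩)
    · cases b with
      | atom a => simp at hsome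
      | dl B => exact Or.inl ⟨B, hb, (Option.some_inj.mp hsome).symm⟩
    · exact Or.inr ⟨b, hb, rfl⟩
  · rintro (⟨B, hB, rfl⟩ | ⟨b, hb, rfl⟩)
    · exact Or.inl ⟨.dl B, hB, rfl⟩
    · exact Or.inr ⟨b, hb, rfl⟩

lemma filterMap_pos_eq (l : List (BElem S)) :
    (l.filterMap fun b => match b with
      | .atom a => some (BElem.atom (sigmaEmbA a))
      | .dl _ => none)
    = (l.filter fun b => decide (∃ a, b = BElem.atom a)).map sigmaEmbB := by
  induction l with
  | nil => rfl
  | cons b t ih =>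
    cases b with
    | atom a =>
      have h1 : (decide (∃ a', BElem.atom a = BElem.atom a')) = true :=
        decide_eq_true ⟨a, rfl⟩
      simp only [List.filterMap_cons, List.filter_cons, h1, if_true, List.map_cons, ih]
      rfl
    | dl A =>
      have h1 : (decide (∃ a', BElem.dl A = BElem.atom a')) = false := by
        simp only [decide_eq_false_iff_not]
        rintro ⟨a', h⟩
        cases h
      simp only [List.filterMap_cons, List.filter_cons, h1, Bool.false_eq_true, if_false, ih]

lemma sigmaRule_pos_filter (r : Rule S) :
    (sigmaRule r).pos.filter (fun b => decide (∃ a, b = BElem.atom a))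
      = (sigmaRule r).pos := by
  rw [List.filter_eq_self]
  intro b hb
  obtain ⟨a, _, rfl⟩ := (mem_sigmaRule_pos r b).mp hb
  exact decide_eq_true ⟨_, rfl⟩

lemma sigmaRule_reduct (r : Rule S) :
    (⟨(sigmaRule r).head,
      (sigmaRule r).pos.filter (fun b => decide (∃ a, b = BElem.atom a)), []⟩ : Rule (sigmaSig S))
    = ⟨sigmaEmbA r.head,
       (r.pos.filter fun b => decide (∃ a, b = BElem.atom a)).map sigmaEmbB, []⟩ := by
  rw [sigmaRule_pos_filter]
  show Rule.mk (sigmaEmbA r.head)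
    (r.pos.filterMap fun b => match b with
      | .atom a => some (BElem.atom (sigmaEmbA a))
      | .dl _ => none) [] = _
  rw [filterMap_pos_eq]

/-- Characterization of the weak reduct of `σ(K)` relative to `I'`. -/
lemma wReduct_sigma_eq :
    wReduct (sigmaO O) (sigmaProg P) (sInt O P I)
      = (fun w => (⟨sigmaEmbA w.head, w.pos.map sigmaEmbB, []⟩ : Rule (sigmaSig S))) ''
          wReduct O P I
        ∪ { r' | ∃ B ∈ DLatoms P, ¬ SatDL O I B ∧ r' = ⟨sigmaBAtom B, [], []⟩ } := by
  ext r'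
  constructor
  · rintro ⟨r'', hr'', hdl, hneg, rfl⟩
    rcases hr'' with hr'' | ⟨B, hB, rfl⟩
    · simp only [Set.mem_iUnion, Set.mem_singleton_iff] at hr''
      obtain ⟨r, hr, rfl⟩ := hr''
      left
      refine ⟨⟨r.head, r.pos.filter (fun b => decide (∃ a, b = BElem.atom a)), []⟩,
        ⟨r, hr, ?_, ?_, rfl⟩, ?_⟩
      · -- every dl-atom of r.pos is satisfied by I
        intro A hA
        have hAdl : A ∈ DLatoms P := ⟨r, hr, Or.inl hA⟩
        have := hneg (.atom (sigmaBAtom A))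
          ((mem_sigmaRule_neg r _).mpr (Or.inl ⟨A, hA, rfl⟩))
        have hnotin : sigmaBAtom A ∉ sInt O P I := this
        by_contra hns
        exact hnotin ((mem_sInt_BAtom O P I A).mpr ⟨hAdl, hns⟩)
      · -- negative body of r is unsatisfied by I
        intro b hb
        have := hneg (sigmaEmbB b) ((mem_sigmaRule_neg r _).mpr (Or.inr ⟨b, hb, rfl⟩))
        exact fun hs => this ((satB_emb O P I b).mpr hs)
      · exact (sigmaRule_reduct r).symm
    · right
      refine ⟨B, hB, ?_, rfl⟩
      have := hneg (.dl (sigmaEmbDL B)) (by simp [List.mem_singleton])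
      exact fun hs => this
        ((satDL_emb O B I (sInt O P I) (mem_sInt_emb O P I)).mpr hs)
  · rintro (⟨w, ⟨r, hr, hdl, hneg, rfl⟩, rfl⟩ | ⟨B, hB, hns, rfl⟩)
    · refine ⟨sigmaRule r, Or.inl ?_, ?_, ?_, ?_⟩
      · simp only [Set.mem_iUnion, Set.mem_singleton_iff]
        exact ⟨r, hr, rfl⟩
      · intro A hA
        obtain ⟨a, _, habs⟩ := (mem_sigmaRule_pos r _).mp hA
        exact absurd habs (by intro h; cases h)
      · intro b' hb'
        rcases (mem_sigmaRule_neg r _).mp hb' with ⟨B, hBpos, rfl⟩ | ⟨b, hb, rfl⟩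
        · intro hsat
          have hmem : sigmaBAtom B ∈ sInt O P I := hsat
          exact ((mem_sInt_BAtom O P I B).mp hmem).2 (hdl B hBpos)
        · exact fun hs => hneg b hb ((satB_emb O P I b).mp hs)
      · exact (sigmaRule_reduct r).symm
    · refine ⟨⟨sigmaBAtom B, [], [.dl (sigmaEmbDL B)]⟩, Or.inr ⟨B, hB, rfl⟩, ?_, ?_, rfl⟩
      · intro A hA; exact absurd hA (by simp)
      · intro b hb
        rw [List.mem_singleton] at hb
        subst hb
        exact fun hs => hns
          ((satDL_emb O B I (sInt O P I) (mem_sInt_emb O P I)).mp hs)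

/-- One step of the immediate-consequence operator, transferred. -/
lemma gamma_sigma (X : Set (PAtom (sigmaSig S))) (Y : Set (PAtom S))
    (hXY : ∀ a : PAtom S, sigmaEmbA a ∈ X ↔ a ∈ Y) :
    gamma (sigmaO O) (wReduct (sigmaO O) (sigmaProg P) (sInt O P I)) X
      = sigmaEmbA '' gamma O (wReduct O P I) Y ∪ sFacts O P I := by
  rw [wReduct_sigma_eq]
  ext a
  constructor
  · rintro ⟨r', hr', rfl, hsat⟩
    rcases hr' with ⟨w, hw, rfl⟩ | ⟨B, hB, hns, rfl⟩
    · left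
      refine ⟨w.head, ⟨w, hw, rfl, ?_⟩, rfl⟩
      intro b hb
      obtain ⟨r, hr, hd, hn, rfl⟩ := hw
      have hb' := List.mem_filter.mp hb
      obtain ⟨a0, rfl⟩ := decide_eq_true_iff.mp hb'.2
      have := hsat (sigmaEmbB (.atom a0)) (List.mem_map.mpr ⟨_, hb, rfl⟩)
      exact (hXY a0).mp this
    · right
      exact ⟨B, hB, hns, rfl⟩
  · rintro (⟨b, ⟨w, hw, rfl, hsat⟩, rfl⟩ | ⟨B, hB, hns, rfl⟩)
    · refine ⟨⟨sigmaEmbA w.head, w.pos.map sigmaEmbB, []⟩, Or.inl ⟨w, hw, rfl⟩, rfl, ?_⟩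
      intro b' hb'
      obtain ⟨b, hb, rfl⟩ := List.mem_map.mp hb'
      obtain ⟨r, hr, hd, hn, rfl⟩ := hw
      have hbf := List.mem_filter.mp hb
      obtain ⟨a0, rfl⟩ := decide_eq_true_iff.mp hbf.2
      exact (hXY a0).mpr (hsat _ hb)
    · exact ⟨⟨sigmaBAtom B, [], []⟩, Or.inr ⟨B, hB, hns, rfl⟩, rfl,
        fun b hb => absurd hb (by simp)⟩

lemma gammaIter_sigma (k : ℕ) :
    gammaIter (sigmaO O) (wReduct (sigmaO O) (sigmaProg P) (sInt O P I)) (k + 1)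
      = sigmaEmbA '' gammaIter O (wReduct O P I) (k + 1) ∪ sFacts O P I := by
  induction k with
  | zero =>
    show gamma _ _ ∅ = sigmaEmbA '' gamma _ _ ∅ ∪ _
    exact gamma_sigma O P I ∅ ∅ (fun a => by simp)
  | succ k ih =>
    show gamma _ _ (gammaIter _ _ (k + 1)) = sigmaEmbA '' gamma _ _ (gammaIter _ _ (k + 1)) ∪ _
    rw [ih]
    apply gamma_sigma
    intro a
    constructor
    · rintro (⟨b, hb, hab⟩ | hf)
      · exact sigmaEmbA_inj hab ▸ hb
      · obtain ⟨B, _, _, hB⟩ := hf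
        exact absurd hB (sigmaEmbA_ne_BAtom a B)
    · intro h; exact Or.inl ⟨a, h, rfl⟩

lemma lfpGamma_sigma :
    lfpGamma (sigmaO O) (wReduct (sigmaO O) (sigmaProg P) (sInt O P I))
      = sigmaEmbA '' lfpGamma O (wReduct O P I) ∪ sFacts O P I := by
  ext a
  simp only [lfpGamma, Set.mem_iUnion, Set.image_iUnion, Set.mem_union, Set.mem_image]
  constructor
  · rintro ⟨k, hk⟩
    cases k with
    | zero => exact absurd hk (Set.notMem_empty a)
    | succ k =>
      rw [gammaIter_sigma O P I k] at hk
      rcases hk with ⟨b, hb, rfl⟩ | hf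
      · exact Or.inl ⟨k + 1, b, hb, rfl⟩
      · exact Or.inr hf
  · rintro (⟨k, b, hb, rfl⟩ | hf)
    · cases k with
      | zero => exact absurd hb (Set.notMem_empty b)
      | succ k =>
        exact ⟨k + 1, by rw [gammaIter_sigma O P I k]; exact Or.inl ⟨b, hb, rfl⟩⟩
    · exact ⟨1, by rw [gammaIter_sigma O P I 0]; exact Or.inr hf⟩

end
end DLP

open DLP in
/-- `I` is a weak answer set of `K` iff
`I' = I ∪ {σ_B : B ∈ DL_P and I ⊭_O B}` is a weak answer set of `σ(K)`. -/
theorem stmt_12 (S : DLSig) (O : Set (Fml S.fol)) (P : Set (Rule S))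
    (hOfin : O.Finite) (hPfin : P.Finite)
    (hO : ∀ φ ∈ O, OntoFml φ) (hQ : ∀ A ∈ DLatoms P, OntoFml A.Q)
    (I : Set (PAtom S)) (hI : I ⊆ HB P) :
    WeakAS O P I ↔
      WeakAS (sigmaO O) (sigmaProg P)
        ((sigmaEmbA '' I) ∪
          { a | ∃ B ∈ DLatoms P, ¬ SatDL O I B ∧ a = sigmaBAtom B }) := by
  have key := lfpGamma_sigma O P I
  unfold WeakAS
  constructor
  · intro h
    show sInt O P I = lfpGamma (sigmaO O) (wReduct (sigmaO O) (sigmaProg P) (sInt O P I))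
    rw [key, ← h]
    rfl
  · intro h
    have h2 : sInt O P I
        = lfpGamma (sigmaO O) (wReduct (sigmaO O) (sigmaProg P) (sInt O P I)) := h
    have h' : sInt O P I = sigmaEmbA '' lfpGamma O (wReduct O P I) ∪ sFacts O P I := by
      rw [← key]; exact h2
    ext a
    constructor
    · intro ha
      have hmem : sigmaEmbA a ∈ sInt O P I := Or.inl ⟨a, ha, rfl⟩
      rw [h'] at hmem
      rcases hmem with ⟨b, hb, hab⟩ | ⟨B, _, _, hB⟩
      · exact sigmaEmbA_inj hab ▸ hb
      · exact absurd hB (sigmaEmbA_ne_BAtom a B)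
    · intro ha
      have hmem : sigmaEmbA a ∈ sigmaEmbA '' lfpGamma O (wReduct O P I) ∪ sFacts O P I :=
        Or.inl ⟨a, ha, rfl⟩
      rw [← h'] at hmem
      rcases hmem with ⟨b, hb, hab⟩ | ⟨B, _, _, hB⟩
      · exact sigmaEmbA_inj hab ▸ hb
      · exact absurd hB (sigmaEmbA_ne_BAtom a B)
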